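/- arXiv:1701.04954 — 2 statements merged into one kernel-verified Lean document; each statement's English description precedes it below -/
import Mathlib

section
/- Let m, L, d be positive integers, let 0 ≤ w_s ≤ L, set v = min{w_s, L−w_s} and t = ⌊(d−1)/2⌋. Let D_t be the sum, over all m-tuples (u_1,…,u_m) of integers satisfying 0 ≤ u_i ≤ v for all i and 2(u_1+⋯+u_m) ≤ t, of ∏_{i=1}^m C(w_s,u_i)·C(L−w_s,u_i), where C(a,b) denotes the binomial coefficient. Then every (m,L,d,w_s)-CSCC 𝒞 satisfies |𝒞|·D_t ≤ C(L,w_s)^m, i.e., C(m,L,d,w_s) ≤ C(L,w_s)^m / D_t. -/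
open Finset Filter

/-- Weight (number of ones) of a binary word. -/
def wt {n : ℕ} (x : Fin n → Bool) : ℕ := (Finset.univ.filter fun i => x i = true).card

/-- The index (in a word of length `m * L`) of position `j` of subblock `i`. -/
def subIdx (m L : ℕ) (i : Fin m) (j : Fin L) : Fin (m * L) :=
  ⟨i.val * L + j.val, by
    have hj : j.val < L := j.isLt
    have hi : i.val + 1 ≤ m := i.isLt
    calc i.val * L + j.val < i.val * L + L := Nat.add_lt_add_left hj _
      _ = (i.val + 1) * L := by ring
      _ ≤ m * L := Nat.mul_le_mul hi (Nat.le_refl L)⟩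

/-- The `i`-th subblock (of length `L`) of a binary word of length `m * L`. -/
def subblock (m L : ℕ) (x : Fin (m * L) → Bool) (i : Fin m) : Fin L → Bool :=
  fun j => x (subIdx m L i j)

/-- The CSCC space: binary words of length `m * L` each of whose `m` subblocks of
length `L` has weight exactly `w`. -/
def CSCCspace (m L w : ℕ) : Set (Fin (m * L) → Bool) :=
  {x | ∀ i : Fin m, wt (subblock m L x i) = w}

/-- The SECC space: binary words of length `m * L` each of whose `m` subblocks of
length `L` has weight at least `w`. -/
def SECCspace (m L w : ℕ) : Set (Fin (m * L) → Bool) :=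
  {x | ∀ i : Fin m, w ≤ wt (subblock m L x i)}

/-- A code with minimum distance `d` inside the space `Sp`. -/
def isCode {n : ℕ} (Sp : Set (Fin n → Bool)) (d : ℕ) (C : Finset (Fin n → Bool)) : Prop :=
  (↑C : Set (Fin n → Bool)) ⊆ Sp ∧ ∀ x ∈ C, ∀ y ∈ C, x ≠ y → d ≤ hammingDist x y

/-- The ball of radius `t` around `x`, taken inside the space `Sp`. -/
def ball {n : ℕ} (Sp : Set (Fin n → Bool)) (x : Fin n → Bool) (t : ℕ) :
    Set (Fin n → Bool) :=
  {y | y ∈ Sp ∧ hammingDist x y ≤ t}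

/-- `C(m,L,d,w)`: the maximum size of an `(m,L,d,w)`-CSCC. -/
noncomputable def maxCSCC (m L d w : ℕ) : ℕ :=
  sSup {k | ∃ C : Finset (Fin (m * L) → Bool), isCode (CSCCspace m L w) d C ∧ C.card = k}

/-- `S(m,L,d,w)`: the maximum size of an `(m,L,d,w)`-SECC. -/
noncomputable def maxSECC (m L d w : ℕ) : ℕ :=
  sSup {k | ∃ C : Finset (Fin (m * L) → Bool), isCode (SECCspace m L w) d C ∧ C.card = k}

/-- `A(n,d,w)`: the maximum size of a constant weight code. -/
noncomputable def maxCWC (n d w : ℕ) : ℕ :=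
  sSup {k | ∃ C : Finset (Fin n → Bool), isCode {x | wt x = w} d C ∧ C.card = k}

/-- `H(n,d,w)`: the maximum size of a heavy weight code. -/
noncomputable def maxHWC (n d w : ℕ) : ℕ :=
  sSup {k | ∃ C : Finset (Fin n → Bool), isCode {x | w ≤ wt x} d C ∧ C.card = k}

/-- `A(n,d)`: the maximum size of a binary code of length `n` and distance `d`. -/
noncomputable def maxBinary (n d : ℕ) : ℕ :=
  sSup {k | ∃ C : Finset (Fin n → Bool),
    (∀ x ∈ C, ∀ y ∈ C, x ≠ y → d ≤ hammingDist x y) ∧ C.card = k}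

/-- `A_q(n,d)`: the maximum size of a `q`-ary code of length `n` and distance `d`. -/
noncomputable def maxQary (q n d : ℕ) : ℕ :=
  sSup {k | ∃ C : Finset (Fin n → Fin q),
    (∀ x ∈ C, ∀ y ∈ C, x ≠ y → d ≤ hammingDist x y) ∧ C.card = k}

/-- The size of a radius-`r` CSCC ball: the sum over all tuples `(u_1, …, u_m)` with
`0 ≤ u_i ≤ min{w, L-w}` and `2(u_1 + ⋯ + u_m) ≤ r` of `∏ i, C(w,u_i)·C(L-w,u_i)`. -/
def csccBallSize (m L w r : ℕ) : ℕ :=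
  ∑ u ∈ (Finset.univ : Finset (Fin m → Fin (min w (L - w) + 1))).filter
      (fun u => 2 * (∑ i, (u i : ℕ)) ≤ r),
    ∏ i, (w.choose (u i : ℕ)) * ((L - w).choose (u i : ℕ))

/-- The binary entropy function (base-2 logarithms, `h 0 = h 1 = 0`). -/
noncomputable def binent (p : ℝ) : ℝ :=
  -(p * Real.logb 2 p) - (1 - p) * Real.logb 2 (1 - p)

/-- The asymptotic CSCC rate `γ(L,δ,w/L)`. -/
noncomputable def gammaRate (L : ℕ) (δ : ℝ) (w : ℕ) : ℝ :=
  Filter.limsup (fun m : ℕ =>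
    Real.logb 2 (maxCSCC m L ⌊(m : ℝ) * L * δ⌋₊ w) / ((m : ℝ) * L)) Filter.atTop

/-- The asymptotic SECC rate `σ(L,δ,w/L)`. -/
noncomputable def sigmaRate (L : ℕ) (δ : ℝ) (w : ℕ) : ℝ :=
  Filter.limsup (fun m : ℕ =>
    Real.logb 2 (maxSECC m L ⌊(m : ℝ) * L * δ⌋₊ w) / ((m : ℝ) * L)) Filter.atTop
section SpherePacking

variable {m L : ℕ}

/-- Block index of a position. -/
def blkOf (L : ℕ) (hL : 0 < L) {m : ℕ} (k : Fin (m * L)) : Fin m :=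
  ⟨k.val / L, (Nat.div_lt_iff_lt_mul hL).2 k.isLt⟩

/-- Position within a block. -/
def posOf (L : ℕ) (hL : 0 < L) {m : ℕ} (k : Fin (m * L)) : Fin L :=
  ⟨k.val % L, Nat.mod_lt _ hL⟩

lemma blkOf_subIdx (hL : 0 < L) (i : Fin m) (j : Fin L) :
    blkOf L hL (subIdx m L i j) = i := by
  apply Fin.ext
  show (i.val * L + j.val) / L = i.val
  rw [Nat.mul_comm, Nat.mul_add_div hL, Nat.div_eq_of_lt j.isLt, Nat.add_zero]

lemma posOf_subIdx (hL : 0 < L) (i : Fin m) (j : Fin L) :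
    posOf L hL (subIdx m L i j) = j := by
  apply Fin.ext
  show (i.val * L + j.val) % L = j.val
  rw [Nat.mul_comm, Nat.mul_add_mod, Nat.mod_eq_of_lt j.isLt]

lemma subIdx_blkOf_posOf (hL : 0 < L) (k : Fin (m * L)) :
    subIdx m L (blkOf L hL k) (posOf L hL k) = k := by
  apply Fin.ext
  show k.val / L * L + k.val % L = k.val
  rw [Nat.mul_comm]
  exact Nat.div_add_mod k.val L

/-- The equivalence between `Fin m × Fin L` and `Fin (m * L)` given by `subIdx`. -/
def blockEquiv (m L : ℕ) (hL : 0 < L) : Fin m × Fin L ≃ Fin (m * L) where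
  toFun p := subIdx m L p.1 p.2
  invFun k := (blkOf L hL k, posOf L hL k)
  left_inv p := by
    ext
    · exact congrArg Fin.val (blkOf_subIdx hL p.1 p.2)
    · exact congrArg Fin.val (posOf_subIdx hL p.1 p.2)
  right_inv k := subIdx_blkOf_posOf hL k

lemma sum_blocks (hL : 0 < L) (f : Fin (m * L) → ℕ) :
    ∑ k, f k = ∑ i : Fin m, ∑ j : Fin L, f (subIdx m L i j) := by
  calc ∑ k, f k = ∑ p : Fin m × Fin L, f (subIdx m L p.1 p.2) :=
        Fintype.sum_equiv (blockEquiv m L hL).symm f (fun p => f (subIdx m L p.1 p.2))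
          (fun k => by
            have := subIdx_blkOf_posOf hL k
            simp only [blockEquiv, Equiv.coe_fn_symm_mk]
            rw [this])
    _ = ∑ i : Fin m, ∑ j : Fin L, f (subIdx m L i j) :=
        Fintype.sum_prod_type (fun p : Fin m × Fin L => f (subIdx m L p.1 p.2))

lemma card_filter_blocks (hL : 0 < L) (p : Fin (m * L) → Prop) [DecidablePred p] :
    (Finset.univ.filter p).card
      = ∑ i : Fin m, (Finset.univ.filter fun j : Fin L => p (subIdx m L i j)).card := by
  rw [Finset.card_filter, sum_blocks hL]
  exact Finset.sum_congr rfl fun i _ => (Finset.card_filter _ _).symm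

lemma card_weight_subtype (L w : ℕ) :
    Fintype.card {z : Fin L → Bool // wt z = w} = L.choose w := by
  have e : {z : Fin L → Bool // wt z = w} ≃ {s : Finset (Fin L) // s.card = w} :=
    { toFun := fun z => ⟨Finset.univ.filter fun j => z.1 j = true, z.2⟩
      invFun := fun s => ⟨fun j => decide (j ∈ s.1), by
        simp only [wt]
        rw [show (Finset.univ.filter fun j => decide (j ∈ s.1) = true) = s.1 by
          ext j; simp]
        exact s.2⟩
      left_inv := fun z => by
        apply Subtype.ext; funext j
        simp
      right_inv := fun s => by
        apply Subtype.ext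
        ext j; simp }
  rw [Fintype.card_congr e, Fintype.card_finset_len, Fintype.card_fin]

lemma card_space (m L w : ℕ) (hL : 0 < L) :
    (Finset.univ.filter fun y : Fin (m * L) → Bool =>
        ∀ i : Fin m, wt (subblock m L y i) = w).card = (L.choose w) ^ m := by
  rw [← Fintype.card_subtype]
  have e1 : {y : Fin (m * L) → Bool // ∀ i, wt (subblock m L y i) = w}
      ≃ {g : Fin m → Fin L → Bool // ∀ i, wt (g i) = w} :=
    { toFun := fun y => ⟨fun i => subblock m L y.1 i, y.2⟩
      invFun := fun g => ⟨fun k => g.1 (blkOf L hL k) (posOf L hL k), by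
        intro i
        have : subblock m L (fun k => g.1 (blkOf L hL k) (posOf L hL k)) i = g.1 i := by
          funext j
          simp only [subblock]
          rw [blkOf_subIdx hL, posOf_subIdx hL]
        rw [this]; exact g.2 i⟩
      left_inv := fun y => by
        apply Subtype.ext; funext k
        show y.1 (subIdx m L (blkOf L hL k) (posOf L hL k)) = y.1 k
        rw [subIdx_blkOf_posOf hL]
      right_inv := fun g => by
        apply Subtype.ext; funext i; funext j
        show g.1 (blkOf L hL (subIdx m L i j)) (posOf L hL (subIdx m L i j)) = g.1 i j
        rw [blkOf_subIdx hL, posOf_subIdx hL] }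
  rw [Fintype.card_congr (e1.trans (Equiv.subtypePiEquivPi (p := fun _ z => wt z = w)))]
  rw [Fintype.card_pi]
  simp [card_weight_subtype L w]

end SpherePacking


/-- Sphere-packing bound for CSCCs: every `(m,L,d,w)`-CSCC `C` satisfies
`|C| · D_t ≤ C(L,w)^m` where `t = ⌊(d-1)/2⌋` and `D_t` is the radius-`t` CSCC
ball size. -/
theorem stmt_2 (m L d w : ℕ) (hm : 0 < m) (hL : 0 < L) (hd : 0 < d) (hw : w ≤ L)
    (C : Finset (Fin (m * L) → Bool)) (hC : isCode (CSCCspace m L w) d C) :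
    C.card * csccBallSize m L w ((d - 1) / 2) ≤ (L.choose w) ^ m := by
  classical
  set t := (d - 1) / 2 with ht
  set v := min w (L - w) with hv
  -- the ambient space as a Finset
  set Space : Finset (Fin (m * L) → Bool) :=
    Finset.univ.filter (fun y => ∀ i : Fin m, wt (subblock m L y i) = w) with hSpace
  have hSpaceCard : Space.card = (L.choose w) ^ m := card_space m L w hL
  -- balls inside the space
  set ballF : (Fin (m * L) → Bool) → Finset (Fin (m * L) → Bool) :=
    fun x => Space.filter (fun y => hammingDist x y ≤ t) with hballF
  -- 2t < d
  have h2t : 2 * t < d := by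
    have := Nat.div_mul_le_self (d - 1) 2
    omega
  -- balls around distinct codewords are disjoint
  have hdisj : ∀ x ∈ C, ∀ y ∈ C, x ≠ y → Disjoint (ballF x) (ballF y) := by
    intro x hx y hy hxy
    rw [Finset.disjoint_left]
    intro z hzx hzy
    have h1 := (Finset.mem_filter.1 hzx).2
    have h2 := (Finset.mem_filter.1 hzy).2
    have hd' := hC.2 x hx y hy hxy
    have : hammingDist x y ≤ hammingDist x z + hammingDist z y :=
      hammingDist_triangle x z y
    rw [hammingDist_comm z y] at this
    omega
  -- each ball contains at least csccBallSize elements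
  have hballcard : ∀ x ∈ C, csccBallSize m L w t ≤ (ballF x).card := by
    intro x hx
    have hxS : ∀ i : Fin m, wt (subblock m L x i) = w := hC.1 hx
    -- support of each block
    set S : Fin m → Finset (Fin L) :=
      fun i => Finset.univ.filter (fun j => subblock m L x i j = true) with hSdef
    have hScard : ∀ i, (S i).card = w := fun i => hxS i
    have hSccard : ∀ i, (S i)ᶜ.card = L - w := by
      intro i
      rw [Finset.card_compl, hScard i, Fintype.card_fin]
    -- the domain of flip data
    set D : Finset ((_ : Fin m → Fin (v + 1)) × (Fin m → Finset (Fin L) × Finset (Fin L))) :=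
      ((Finset.univ : Finset (Fin m → Fin (v + 1))).filter
        (fun u => 2 * (∑ i, (u i : ℕ)) ≤ t)).sigma
        (fun u => Fintype.piFinset
          (fun i => (S i).powersetCard (u i) ×ˢ (S i)ᶜ.powersetCard (u i))) with hD
    have hDcard : D.card = csccBallSize m L w t := by
      rw [hD, Finset.card_sigma, csccBallSize]
      refine Finset.sum_congr rfl fun u hu => ?_
      rw [Fintype.card_piFinset]
      refine Finset.prod_congr rfl fun i _ => ?_
      rw [Finset.card_product, Finset.card_powersetCard, Finset.card_powersetCard,
        hScard i, hSccard i]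
    -- the flipping map
    set φ : ((_ : Fin m → Fin (v + 1)) × (Fin m → Finset (Fin L) × Finset (Fin L)))
        → (Fin (m * L) → Bool) :=
      fun p k => if posOf L hL k ∈ (p.2 (blkOf L hL k)).1 ∪ (p.2 (blkOf L hL k)).2
        then !(x k) else x k with hφ
    have hsub : ∀ p (i : Fin m) (j : Fin L),
        subblock m L (φ p) i j
          = if j ∈ (p.2 i).1 ∪ (p.2 i).2 then !(x (subIdx m L i j)) else x (subIdx m L i j) := by
      intro p i j
      simp only [subblock, hφ]
      rw [blkOf_subIdx hL, posOf_subIdx hL]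
    -- unpack membership in D
    have hmemD : ∀ p ∈ D, (2 * (∑ i, ((p.1 i : ℕ))) ≤ t) ∧
        ∀ i : Fin m, ((p.2 i).1 ⊆ S i ∧ ((p.2 i).1).card = (p.1 i : ℕ)) ∧
          ((p.2 i).2 ⊆ (S i)ᶜ ∧ ((p.2 i).2).card = (p.1 i : ℕ)) := by
      intro p hp
      rw [hD, Finset.mem_sigma] at hp
      obtain ⟨hu, hf⟩ := hp
      refine ⟨(Finset.mem_filter.1 hu).2, fun i => ?_⟩
      have := (Fintype.mem_piFinset.1 hf) i
      rw [Finset.mem_product] at this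
      exact ⟨Finset.mem_powersetCard.1 this.1, Finset.mem_powersetCard.1 this.2⟩
    -- the filter of differing positions in block i is exactly A ∪ B
    have hdiff : ∀ p ∈ D, ∀ i : Fin m,
        (Finset.univ.filter fun j : Fin L =>
          x (subIdx m L i j) ≠ φ p (subIdx m L i j)) = (p.2 i).1 ∪ (p.2 i).2 := by
      intro p hp i
      ext j
      have h : φ p (subIdx m L i j)
          = if j ∈ (p.2 i).1 ∪ (p.2 i).2 then !(x (subIdx m L i j)) else x (subIdx m L i j) :=
        hsub p i j
      simp only [Finset.mem_filter, Finset.mem_univ, true_and]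
      by_cases hj : j ∈ (p.2 i).1 ∪ (p.2 i).2 <;> simp [h, hj]
    -- φ maps D into the ball around x
    have hmaps : ∀ p ∈ D, φ p ∈ ballF x := by
      intro p hp
      obtain ⟨hut, hf⟩ := hmemD p hp
      have hABdisj : ∀ i : Fin m, Disjoint ((p.2 i).1) ((p.2 i).2) := by
        intro i
        exact Finset.disjoint_left.2 fun a ha hb =>
          (Finset.mem_compl.1 ((hf i).2.1 hb)) ((hf i).1.1 ha)
      have hcardAB : ∀ i : Fin m, ((p.2 i).1 ∪ (p.2 i).2).card = 2 * (p.1 i : ℕ) := by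
        intro i
        rw [Finset.card_union_of_disjoint (hABdisj i), (hf i).1.2, (hf i).2.2]
        ring
      rw [hballF, Finset.mem_filter]
      constructor
      · -- in the space
        rw [hSpace, Finset.mem_filter]
        refine ⟨Finset.mem_univ _, fun i => ?_⟩
        have hkey : (Finset.univ.filter fun j : Fin L => subblock m L (φ p) i j = true)
            = (S i \ (p.2 i).1) ∪ (p.2 i).2 := by
          ext j
          have h := hsub p i j
          simp only [Finset.mem_filter, Finset.mem_univ, true_and, Finset.mem_union,
            Finset.mem_sdiff]
          have hjS : j ∈ S i ↔ x (subIdx m L i j) = true := by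
            rw [hSdef]; exact ⟨fun h => (Finset.mem_filter.1 h).2, fun h => Finset.mem_filter.2 ⟨Finset.mem_univ _, h⟩⟩
          by_cases hjA : j ∈ (p.2 i).1
          · have hxj : x (subIdx m L i j) = true := hjS.1 ((hf i).1.1 hjA)
            have : j ∈ (p.2 i).1 ∪ (p.2 i).2 := Finset.mem_union_left _ hjA
            have hjB : j ∉ (p.2 i).2 := Finset.disjoint_left.1 (hABdisj i) hjA
            simp [h, this, hxj, hjA, hjB]
          · by_cases hjB : j ∈ (p.2 i).2
            · have hxj : x (subIdx m L i j) = false := by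
                have := Finset.mem_compl.1 ((hf i).2.1 hjB)
                rw [hjS] at this
                simpa using this
              have : j ∈ (p.2 i).1 ∪ (p.2 i).2 := Finset.mem_union_right _ hjB
              simp [h, this, hxj, hjB]
            · have : j ∉ (p.2 i).1 ∪ (p.2 i).2 := by
                simp [hjA, hjB]
              simp [h, this, hjA, hjB, hjS]
        have hdisj2 : Disjoint (S i \ (p.2 i).1) ((p.2 i).2) :=
          Finset.disjoint_left.2 fun a ha hb =>
            (Finset.mem_compl.1 ((hf i).2.1 hb)) (Finset.mem_sdiff.1 ha).1
        have hui_le : (p.1 i : ℕ) ≤ w := by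
          have : (p.1 i : ℕ) ≤ v := Nat.lt_succ_iff.1 (p.1 i).isLt
          omega
        show wt (subblock m L (φ p) i) = w
        rw [wt, hkey, Finset.card_union_of_disjoint hdisj2,
          Finset.card_sdiff_of_subset (by
            intro a ha
            exact (hf i).1.1 ha), hScard i, (hf i).1.2, (hf i).2.2]
        omega
      · -- within distance t
        show hammingDist x (φ p) ≤ t
        rw [hammingDist, card_filter_blocks hL]
        calc ∑ i : Fin m, (Finset.univ.filter fun j : Fin L =>
              x (subIdx m L i j) ≠ φ p (subIdx m L i j)).card
            = ∑ i : Fin m, 2 * (p.1 i : ℕ) := by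
              refine Finset.sum_congr rfl fun i _ => ?_
              rw [hdiff p hp i, hcardAB i]
          _ = 2 * ∑ i : Fin m, (p.1 i : ℕ) := by rw [Finset.mul_sum]
          _ ≤ t := hut
    -- φ is injective on D
    have hinj : Set.InjOn φ ↑D := by
      intro p hp q hq hpq
      have hfp := (hmemD p hp).2
      have hfq := (hmemD q hq).2
      have hAB : ∀ i : Fin m, (p.2 i).1 ∪ (p.2 i).2 = (q.2 i).1 ∪ (q.2 i).2 := by
        intro i
        rw [← hdiff p hp i, ← hdiff q hq i, hpq]
      have hA : ∀ i : Fin m, (p.2 i).1 = (q.2 i).1 := by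
        intro i
        have h1 : (p.2 i).1 = ((p.2 i).1 ∪ (p.2 i).2) ∩ S i := by
          ext a
          simp only [Finset.mem_inter, Finset.mem_union]
          constructor
          · intro ha; exact ⟨Or.inl ha, (hfp i).1.1 ha⟩
          · rintro ⟨(ha | hb), hS⟩
            · exact ha
            · exact absurd hS (Finset.mem_compl.1 ((hfp i).2.1 hb))
        have h2 : (q.2 i).1 = ((q.2 i).1 ∪ (q.2 i).2) ∩ S i := by
          ext a
          simp only [Finset.mem_inter, Finset.mem_union]
          constructor
          · intro ha; exact ⟨Or.inl ha, (hfq i).1.1 ha⟩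
          · rintro ⟨(ha | hb), hS⟩
            · exact ha
            · exact absurd hS (Finset.mem_compl.1 ((hfq i).2.1 hb))
        rw [h1, h2, hAB i]
      have hB : ∀ i : Fin m, (p.2 i).2 = (q.2 i).2 := by
        intro i
        have h1 : (p.2 i).2 = ((p.2 i).1 ∪ (p.2 i).2) \ S i := by
          ext a
          simp only [Finset.mem_sdiff, Finset.mem_union]
          constructor
          · intro ha
            exact ⟨Or.inr ha, Finset.mem_compl.1 ((hfp i).2.1 ha)⟩
          · rintro ⟨(ha | hb), hS⟩
            · exact absurd ((hfp i).1.1 ha) hS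
            · exact hb
        have h2 : (q.2 i).2 = ((q.2 i).1 ∪ (q.2 i).2) \ S i := by
          ext a
          simp only [Finset.mem_sdiff, Finset.mem_union]
          constructor
          · intro ha
            exact ⟨Or.inr ha, Finset.mem_compl.1 ((hfq i).2.1 ha)⟩
          · rintro ⟨(ha | hb), hS⟩
            · exact absurd ((hfq i).1.1 ha) hS
            · exact hb
        rw [h1, h2, hAB i]
      have hf2 : p.2 = q.2 := by
        funext i
        exact Prod.ext (hA i) (hB i)
      have hf1 : p.1 = q.1 := by
        funext i
        apply Fin.ext
        rw [← (hfp i).1.2, ← (hfq i).1.2, hA i]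
      exact Sigma.ext hf1 (heq_of_eq hf2)
    have := Finset.card_le_card_of_injOn φ hmaps hinj
    omega
  -- put things together
  calc C.card * csccBallSize m L w t
      = ∑ _x ∈ C, csccBallSize m L w t := by rw [Finset.sum_const, smul_eq_mul, mul_comm]
    _ ≤ ∑ x ∈ C, (ballF x).card := Finset.sum_le_sum hballcard
    _ = (C.biUnion ballF).card := (Finset.card_biUnion hdisj).symm
    _ ≤ Space.card := Finset.card_le_card (by
        intro y hy
        obtain ⟨x, _, hyx⟩ := Finset.mem_biUnion.1 hy
        exact Finset.mem_of_mem_filter y hyx)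
    _ = (L.choose w) ^ m := hSpaceCard
end

section
/- Let m, L, d be positive integers and 0 ≤ w_s ≤ L. Then S(m,L,d,w_s) ≥ (Σ_{i=w_s}^{L} C(L,i))^m · A(mL,d) / 2^{mL}, where C(a,b) denotes the binomial coefficient. Equivalently, for every set 𝒞 of binary words of length mL with pairwise Hamming distance at least d, there exists a translate x + 𝒞 (coordinatewise XOR by a word x of length mL) such that |𝒮(m,L,w_s) ∩ (x + 𝒞)| ≥ |𝒮(m,L,w_s)|·|𝒞| / 2^{mL}, and this intersection is an (m,L,d,w_s)-SECC. -/
open Finset Filter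

section Aux

lemma wt_le' {n : ℕ} (x : Fin n → Bool) : wt x ≤ n := by
  simpa [wt] using Finset.card_filter_le (univ : Finset (Fin n)) (fun i => x i = true)

lemma count_weight (L i : ℕ) :
    ((univ : Finset (Fin L → Bool)).filter fun y => wt y = i).card = L.choose i := by
  have h : ((univ : Finset (Fin L → Bool)).filter fun y => wt y = i).card
      = (Finset.powersetCard i (univ : Finset (Fin L))).card := by
    apply Finset.card_bij (fun y _ => univ.filter fun j => y j = true)
    · intro y hy
      simp only [mem_filter, mem_univ, true_and] at hy
      simp [Finset.mem_powersetCard]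
      exact hy
    · intro y hy z hz h
      funext j
      have hj := Finset.ext_iff.mp h j
      simp only [mem_filter, mem_univ, true_and] at hj
      cases hyj : y j <;> cases hzj : z j <;> simp_all
    · intro s hs
      refine ⟨fun j => decide (j ∈ s), ?_, ?_⟩
      · rw [Finset.mem_powersetCard] at hs
        simp [wt, ← hs.2]
      · ext j; simp
  rw [h, Finset.card_powersetCard, Finset.card_univ, Fintype.card_fin]

lemma count_ge (L w : ℕ) :
    ((univ : Finset (Fin L → Bool)).filter fun y => w ≤ wt y).card
      = ∑ i ∈ Finset.Icc w L, L.choose i := by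
  have h : ((univ : Finset (Fin L → Bool)).filter fun y => w ≤ wt y)
      = (Finset.Icc w L).biUnion
        (fun i => (univ : Finset (Fin L → Bool)).filter fun y => wt y = i) := by
    ext y
    simp only [mem_filter, mem_univ, true_and, mem_biUnion, Finset.mem_Icc]
    constructor
    · intro hy; exact ⟨wt y, ⟨hy, wt_le' y⟩, rfl⟩
    · rintro ⟨i, ⟨h1, _⟩, rfl⟩; exact h1
  rw [h, Finset.card_biUnion]
  · exact Finset.sum_congr rfl fun i _ => count_weight L i
  · intro a _ b _ hab
    simp only [Finset.disjoint_left, mem_filter]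
    rintro y ⟨_, rfl⟩ ⟨_, h2⟩
    exact hab (h2 ▸ rfl)

/-- Gluing `m` blocks of length `L` into one word of length `m*L`. -/
def glue (m L : ℕ) (hL : 0 < L) (g : Fin m → (Fin L → Bool)) : Fin (m * L) → Bool :=
  fun k => g ⟨k.val / L, by
      exact Nat.div_lt_of_lt_mul (Nat.lt_of_lt_of_le k.isLt (Nat.le_of_eq (Nat.mul_comm m L)))⟩
    ⟨k.val % L, Nat.mod_lt _ hL⟩

lemma subblock_glue (m L : ℕ) (hL : 0 < L) (g : Fin m → (Fin L → Bool)) (i : Fin m) :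
    subblock m L (glue m L hL g) i = g i := by
  funext j
  simp only [subblock, glue, subIdx]
  have h1 : (i.val * L + j.val) / L = i.val := by
    rw [Nat.mul_comm, Nat.mul_add_div hL, Nat.div_eq_of_lt j.isLt, Nat.add_zero]
  have h2 : (i.val * L + j.val) % L = j.val := by
    rw [Nat.mul_comm, Nat.mul_add_mod, Nat.mod_eq_of_lt j.isLt]
  congr 1 <;> [exact Fin.ext h1; exact Fin.ext h2]

lemma secc_card_ge (m L w : ℕ) (hL : 0 < L) :
    (∑ i ∈ Finset.Icc w L, L.choose i) ^ m
      ≤ ((univ : Finset (Fin (m * L) → Bool)).filter (fun x => ∀ i : Fin m, w ≤ wt (subblock m L x i))).card := by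
  rw [← count_ge L w]
  have hcard : (((univ : Finset (Fin L → Bool)).filter fun y => w ≤ wt y).card) ^ m
      = (Fintype.piFinset (fun _ : Fin m =>
          (univ : Finset (Fin L → Bool)).filter fun y => w ≤ wt y)).card := by
    rw [Fintype.card_piFinset]
    simp
  rw [hcard]
  apply Finset.card_le_card_of_injOn (glue m L hL)
  · intro g hg
    simp only [Fintype.mem_piFinset, mem_coe, mem_filter, mem_univ, true_and] at hg ⊢
    intro i
    rw [subblock_glue m L hL]
    exact hg i
  · intro g _ g' _ h
    funext i j
    have h2 : subblock m L (glue m L hL g) i = subblock m L (glue m L hL g') i := by rw [h]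
    rw [subblock_glue m L hL g i, subblock_glue m L hL g' i] at h2
    exact congrFun h2 j

/-- Pointwise xor of two binary words. -/
def xadd {n : ℕ} (x y : Fin n → Bool) : Fin n → Bool := fun i => xor (x i) (y i)

lemma xadd_xadd {n : ℕ} (x y : Fin n → Bool) : xadd x (xadd x y) = y := by
  funext i; simp [xadd]

lemma xadd_inj {n : ℕ} (x : Fin n → Bool) : Function.Injective (xadd x) := by
  intro a b h
  have := congrArg (xadd x) h
  rwa [xadd_xadd, xadd_xadd] at this

lemma hammingDist_xadd {n : ℕ} (x a b : Fin n → Bool) :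
    hammingDist (xadd x a) (xadd x b) = hammingDist a b := by
  show (Finset.univ.filter fun i => xadd x a i ≠ xadd x b i).card
    = (Finset.univ.filter fun i => a i ≠ b i).card
  congr 1
  ext i
  simp only [mem_filter, mem_univ, true_and, xadd]
  cases x i <;> simp

lemma bddAbove_codes {n : ℕ} (P : Finset (Fin n → Bool) → Prop) :
    BddAbove {k | ∃ C : Finset (Fin n → Bool), P C ∧ C.card = k} := by
  refine ⟨2 ^ n, ?_⟩
  rintro k ⟨C, _, rfl⟩
  calc C.card ≤ Fintype.card (Fin n → Bool) := Finset.card_le_univ C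
    _ = 2 ^ n := by simp

end Aux

/-- Elias–Bassalygo type bound for SECCs:
`S(m,L,d,w) ≥ (Σ_{i=w}^{L} C(L,i))^m · A(mL,d) / 2^{mL}`. -/
theorem stmt_5 (m L d w : ℕ) (hm : 0 < m) (hL : 0 < L) (hd : 0 < d) (hw : w ≤ L) :
    ((∑ i ∈ Finset.Icc w L, L.choose i : ℕ) : ℝ) ^ m * (maxBinary (m * L) d : ℝ) /
        2 ^ (m * L)
      ≤ (maxSECC m L d w : ℝ) := by
  classical
  -- an optimal binary code
  obtain ⟨C₀, hC₀code, hC₀card⟩ : ∃ C : Finset (Fin (m * L) → Bool),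
      (∀ x ∈ C, ∀ y ∈ C, x ≠ y → d ≤ hammingDist x y) ∧ C.card = maxBinary (m * L) d := by
    have hne : {k | ∃ C : Finset (Fin (m * L) → Bool),
        (∀ x ∈ C, ∀ y ∈ C, x ≠ y → d ≤ hammingDist x y) ∧ C.card = k}.Nonempty :=
      ⟨0, ∅, by simp⟩
    exact Nat.sSup_mem hne (bddAbove_codes _)
  set Sfin : Finset (Fin (m * L) → Bool) :=
    (univ : Finset (Fin (m * L) → Bool)).filter
      (fun x => ∀ i : Fin m, w ≤ wt (subblock m L x i)) with hSfin
  -- double counting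
  have hinner : ∀ cc : Fin (m * L) → Bool,
      ((univ : Finset (Fin (m * L) → Bool)).filter fun x => xadd x cc ∈ Sfin).card
        = Sfin.card := by
    intro cc
    apply Finset.card_bij (fun x _ => xadd cc x)
    · intro x hx
      simp only [mem_filter, mem_univ, true_and] at hx
      have : xadd x cc = xadd cc x := by funext i; simp [xadd, Bool.xor_comm]
      rwa [this] at hx
    · intro a _ b _ h
      exact xadd_inj cc h
    · intro s hs
      refine ⟨xadd cc s, ?_, xadd_xadd cc s⟩
      simp only [mem_filter, mem_univ, true_and]
      have : xadd (xadd cc s) cc = s := by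
        funext i; simp [xadd, Bool.xor_comm, Bool.xor_assoc]
      rwa [this]
  have hdouble : ∑ x : Fin (m * L) → Bool,
      (C₀.filter fun cc => xadd x cc ∈ Sfin).card = C₀.card * Sfin.card := by
    have : ∀ x : Fin (m * L) → Bool, (C₀.filter fun cc => xadd x cc ∈ Sfin).card
        = ∑ cc ∈ C₀, if xadd x cc ∈ Sfin then 1 else 0 := fun x => Finset.card_filter _ _
    rw [Finset.sum_congr rfl fun x _ => this x, Finset.sum_comm]
    rw [Finset.sum_congr rfl (fun cc _ => (Finset.card_filter (fun x => xadd x cc ∈ Sfin) univ).symm)]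
    rw [Finset.sum_congr rfl fun cc _ => hinner cc, Finset.sum_const, smul_eq_mul]
  -- averaging
  obtain ⟨x, -, hx⟩ : ∃ x ∈ (univ : Finset (Fin (m * L) → Bool)),
      Sfin.card * C₀.card ≤ 2 ^ (m * L) * (C₀.filter fun cc => xadd x cc ∈ Sfin).card := by
    apply Finset.exists_le_of_sum_le Finset.univ_nonempty
    rw [Finset.sum_const, ← Finset.mul_sum, hdouble, smul_eq_mul, Finset.card_univ]
    have hcu : Fintype.card (Fin (m * L) → Bool) = 2 ^ (m * L) := by simp
    rw [hcu]; ring_nf; rfl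
  -- the translated code
  set D : Finset (Fin (m * L) → Bool) :=
    (C₀.filter fun cc => xadd x cc ∈ Sfin).image (xadd x) with hD
  have hDcard : D.card = (C₀.filter fun cc => xadd x cc ∈ Sfin).card :=
    Finset.card_image_of_injective _ (xadd_inj x)
  have hDcode : isCode (SECCspace m L w) d D := by
    constructor
    · intro a ha
      simp only [hD, Finset.coe_image, Set.mem_image, mem_coe, mem_filter] at ha
      obtain ⟨cc, ⟨_, hcc⟩, rfl⟩ := ha
      simp only [hSfin, mem_filter, mem_univ, true_and] at hcc
      exact hcc
    · intro a ha b hb hab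
      simp only [hD, Finset.mem_image, mem_filter] at ha hb
      obtain ⟨c₁, ⟨hc₁, _⟩, rfl⟩ := ha
      obtain ⟨c₂, ⟨hc₂, _⟩, rfl⟩ := hb
      rw [hammingDist_xadd]
      exact hC₀code c₁ hc₁ c₂ hc₂ (fun h => hab (by rw [h]))
  have hDle : D.card ≤ maxSECC m L d w :=
    le_csSup (bddAbove_codes _) ⟨D, hDcode, rfl⟩
  -- combine in ℕ
  have hS : (∑ i ∈ Finset.Icc w L, L.choose i) ^ m ≤ Sfin.card := secc_card_ge m L w hL
  have hnat : (∑ i ∈ Finset.Icc w L, L.choose i) ^ m * maxBinary (m * L) d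
      ≤ 2 ^ (m * L) * maxSECC m L d w := by
    calc (∑ i ∈ Finset.Icc w L, L.choose i) ^ m * maxBinary (m * L) d
        = (∑ i ∈ Finset.Icc w L, L.choose i) ^ m * C₀.card := by rw [hC₀card]
      _ ≤ Sfin.card * C₀.card := Nat.mul_le_mul_right _ hS
      _ ≤ 2 ^ (m * L) * (C₀.filter fun cc => xadd x cc ∈ Sfin).card := hx
      _ = 2 ^ (m * L) * D.card := by rw [hDcard]
      _ ≤ 2 ^ (m * L) * maxSECC m L d w := Nat.mul_le_mul_left _ hDle
  rw [div_le_iff₀ (by positivity)]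
  calc ((∑ i ∈ Finset.Icc w L, L.choose i : ℕ) : ℝ) ^ m * (maxBinary (m * L) d : ℝ)
      = (((∑ i ∈ Finset.Icc w L, L.choose i) ^ m * maxBinary (m * L) d : ℕ) : ℝ) := by
        push_cast; ring
    _ ≤ ((2 ^ (m * L) * maxSECC m L d w : ℕ) : ℝ) := by exact_mod_cast hnat
    _ = (maxSECC m L d w : ℝ) * 2 ^ (m * L) := by push_cast; ring
end
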